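/- In the construction of the previous statement (database 𝔯 over R = V ∪ {x_1,…,x_d} built from hypergraphs H_1,…,H_d with rows r_0, r_j for edges E_j, and r_v for vertices v ∈ V), for each i ∈ {1,…,d} the hypergraph of punctured difference sets 𝒟_{x_i} = {D(r,s) \ {x_i} : r, s ∈ 𝔯, r(x_i) ≠ s(x_i)} satisfies min(𝒟_{x_i}) = min(H_i); consequently, 𝒟_{x_i} and H_i have the same minimal hitting sets. -/

import Mathlib

open scoped Classical

/-- The difference set of two rows: the attributes on which they disagree. -/
def diffSet {R W : Type*} (r s : R → W) : Set R := {b | r b ≠ s b}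

/-- `T` is a hitting set of the hypergraph `H`: it intersects every edge. -/
def IsHittingSet {α : Type*} (H : Set (Set α)) (T : Set α) : Prop :=
  ∀ E ∈ H, (T ∩ E).Nonempty

/-- `T` is an inclusion-wise minimal hitting set of the hypergraph `H`. -/
def IsMinHittingSet {α : Type*} (H : Set (Set α)) (T : Set α) : Prop :=
  IsHittingSet H T ∧ ∀ T' ⊂ T, ¬ IsHittingSet H T'

/-- The minimization of a hypergraph: its inclusion-wise minimal edges. -/
def minEdges {α : Type*} (H : Set (Set α)) : Set (Set α) :=
  {E ∈ H | ∀ E' ∈ H, E' ⊆ E → E' = E}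

/-- The row `r_j` of the reduction, for the edge `E j` belonging to hypergraph
`H (idx j)`: value `j` (encoded as `(j : ℕ) + 1 ∈ {1, …, m}`) on the attributes of `E j`,
value `1` on the fresh attribute `x_{idx j}`, and `0` (i.e. `some 0`) elsewhere. -/
noncomputable def edgeRow {V : Type*} {d m : ℕ} (E : Fin m → Set V) (idx : Fin m → Fin d)
    (j : Fin m) : V ⊕ Fin d → Option ℕ :=
  fun c =>
    match c with
    | Sum.inl a => if a ∈ E j then some ((j : ℕ) + 1) else some 0
    | Sum.inr i => if i = idx j then some 1 else some 0

/-- The row `r_v` of the reduction: the fresh value `×` (encoded as `none`) in column `v`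
and `0` elsewhere. -/
noncomputable def vertexRow {V : Type*} (d : ℕ) (v : V) : V ⊕ Fin d → Option ℕ :=
  fun c => if c = Sum.inl v then none else some 0

/-- The database `𝔯` of the reduction over schema `R = V ∪ {x_1, …, x_d}`. -/
noncomputable def unionDb {V : Type*} {d m : ℕ} (E : Fin m → Set V)
    (idx : Fin m → Fin d) : Set (V ⊕ Fin d → Option ℕ) :=
  insert (fun _ => some 0) (Set.range (edgeRow E idx) ∪ Set.range (vertexRow d))

/-- The hypergraph `𝒟_{x_i}` of punctured difference sets of the database of the
reduction: `{D(r,s) \ {x_i} : r, s ∈ 𝔯, r(x_i) ≠ s(x_i)}`. -/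
noncomputable def puncturedDiffSetsAt {V : Type*} {d m : ℕ} (E : Fin m → Set V)
    (idx : Fin m → Fin d) (i : Fin d) : Set (Set (V ⊕ Fin d)) :=
  {D | ∃ r ∈ unionDb E idx, ∃ s ∈ unionDb E idx,
    r (Sum.inr i) ≠ s (Sum.inr i) ∧ D = diffSet r s \ {Sum.inr i}}

/-- In the construction of the database `𝔯` from hypergraphs `H_1, …, H_d`, for each `i`
the hypergraph `𝒟_{x_i}` of punctured difference sets satisfies
`min(𝒟_{x_i}) = min(H_i)` (identifying `H_i` with its copy on the schema
`V ∪ {x_1, …, x_d}` via the embedding of `V`); consequently, `𝒟_{x_i}` and `H_i` have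
the same minimal hitting sets. -/
-- auxiliary lemmas

lemma mem_unionDb_iff {V : Type*} {d m : ℕ} {E : Fin m → Set V} {idx : Fin m → Fin d}
    {r : V ⊕ Fin d → Option ℕ} :
    r ∈ unionDb E idx ↔ r = (fun _ => some 0) ∨ (∃ j, r = edgeRow E idx j) ∨
      ∃ v, r = vertexRow d v := by
  simp [unionDb, Set.mem_insert_iff, Set.mem_union, Set.mem_range, eq_comm]

lemma L1 {V : Type*} {d m : ℕ} (E : Fin m → Set V) (idx : Fin m → Fin d) (i : Fin d)
    (j : Fin m) (hj : idx j = i) :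
    Sum.inl '' E j ∈ puncturedDiffSetsAt E idx i := by
  refine ⟨edgeRow E idx j, ?_, (fun _ => some 0), ?_, ?_, ?_⟩
  · exact Set.mem_insert_iff.mpr (Or.inr (Or.inl ⟨j, rfl⟩))
  · exact Set.mem_insert _ _
  · simp [edgeRow, hj]
  · ext c
    cases c with
    | inl a => by_cases h : a ∈ E j <;> simp [diffSet, edgeRow, h]
    | inr i' =>
      by_cases h : i' = idx j
      · subst h; simp [diffSet, edgeRow, hj]
      · simp [diffSet, edgeRow, h]

lemma rowAt {V : Type*} {d m : ℕ} {E : Fin m → Set V} {idx : Fin m → Fin d} (i : Fin d)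
    {r : V ⊕ Fin d → Option ℕ} (hr : r ∈ unionDb E idx) :
    r (Sum.inr i) = some 0 ∨ ∃ j, idx j = i ∧ r = edgeRow E idx j := by
  rcases mem_unionDb_iff.mp hr with rfl | ⟨j, rfl⟩ | ⟨v, rfl⟩
  · exact Or.inl rfl
  · by_cases h : idx j = i
    · exact Or.inr ⟨j, h, rfl⟩
    · left; simp [edgeRow, Ne.symm h, fun hh : i = idx j => h hh.symm]
  · left; simp [vertexRow]

lemma notEq {V : Type*} {d m : ℕ} {E : Fin m → Set V} {idx : Fin m → Fin d} {i : Fin d}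
    {j : Fin m} (hj : idx j = i) {s : V ⊕ Fin d → Option ℕ} (hs : s ∈ unionDb E idx)
    (hsi : s (Sum.inr i) = some 0) (a : V) :
    s (Sum.inl a) ≠ some ((j : ℕ) + 1) := by
  rcases mem_unionDb_iff.mp hs with rfl | ⟨j', rfl⟩ | ⟨v, rfl⟩
  · simp
  · have hj' : j' ≠ j := by
      rintro rfl
      simp [edgeRow, hj] at hsi
    have hv : ((j' : ℕ) + 1) ≠ ((j : ℕ) + 1) := by
      simpa [Fin.val_injective.eq_iff] using hj'
    by_cases h : a ∈ E j' <;> simp [edgeRow, h, hv, Fin.val_injective.ne hj']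
  · by_cases h : (Sum.inl a : V ⊕ Fin d) = Sum.inl v <;> simp [vertexRow, h]

lemma L2 {V : Type*} {d m : ℕ} (E : Fin m → Set V) (idx : Fin m → Fin d) (i : Fin d)
    {D : Set (V ⊕ Fin d)} (hD : D ∈ puncturedDiffSetsAt E idx i) :
    ∃ j, idx j = i ∧ Sum.inl '' E j ⊆ D := by
  obtain ⟨r, hr, s, hs, hne, rfl⟩ := hD
  have key : ∀ (r s : V ⊕ Fin d → Option ℕ), s ∈ unionDb E idx →
      ∀ j, idx j = i → r = edgeRow E idx j → s (Sum.inr i) = some 0 →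
      Sum.inl '' E j ⊆ diffSet r s \ {Sum.inr i} := by
    rintro r s hs j hj rfl hsi _ ⟨a, ha, rfl⟩
    refine ⟨?_, by simp⟩
    show edgeRow E idx j (Sum.inl a) ≠ s (Sum.inl a)
    simp only [edgeRow, if_pos ha]
    exact fun h => notEq hj hs hsi a h.symm
  have hcomm : diffSet r s = diffSet s r := by
    ext c; simp [diffSet, ne_comm]
  rcases rowAt i hr with hr0 | ⟨j, hj, hre⟩
  · rcases rowAt i hs with hs0 | ⟨j, hj, hse⟩
    · exact absurd (hr0.trans hs0.symm) hne
    · exact ⟨j, hj, by rw [hcomm]; exact key s r hr j hj hse hr0⟩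
  · rcases rowAt i hs with hs0 | ⟨j', hj', hse⟩
    · exact ⟨j, hj, key r s hs j hj hre hs0⟩
    · exfalso
      apply hne
      rw [hre, hse]
      simp [edgeRow, hj, hj']

theorem minEdges_puncturedDiffSetsAt {V : Type*} [Fintype V] (d m : ℕ)
    (E : Fin m → Set V) (idx : Fin m → Fin d)
    (H : Fin d → Set (Set V)) (hH : ∀ i, H i = {S | ∃ j, idx j = i ∧ E j = S})
    (i : Fin d) :
    minEdges (puncturedDiffSetsAt E idx i) =
        (fun S : Set V => Sum.inl '' S) '' minEdges (H i) ∧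
      ∀ T : Set (V ⊕ Fin d),
        IsMinHittingSet (puncturedDiffSetsAt E idx i) T ↔
          IsMinHittingSet ((fun S : Set V => Sum.inl '' S) '' H i) T := by
  have hinj : Function.Injective (fun S : Set V => Sum.inl (β := Fin d) '' S) :=
    Set.image_injective.mpr Sum.inl_injective
  constructor
  · ext D
    constructor
    · rintro ⟨hD, hmin⟩
      obtain ⟨j, hj, hsub⟩ := L2 E idx i hD
      have hDeq : Sum.inl '' E j = D := hmin _ (L1 E idx i j hj) hsub
      refine ⟨E j, ⟨(hH i).symm ▸ ⟨j, hj, rfl⟩, ?_⟩, hDeq⟩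
      intro S hS hSsub
      rw [hH] at hS
      obtain ⟨j', hj', rfl⟩ := hS
      have h1 : Sum.inl '' E j' ⊆ D := hDeq ▸ Set.image_mono hSsub
      have h2 : Sum.inl '' E j' = D := hmin _ (L1 E idx i j' hj') h1
      exact hinj (h2.trans hDeq.symm)
    · rintro ⟨S, ⟨hS, hSmin⟩, rfl⟩
      rw [hH] at hS
      obtain ⟨j, hj, rfl⟩ := hS
      refine ⟨L1 E idx i j hj, ?_⟩
      intro D' hD' hsub
      obtain ⟨j', hj', hsub'⟩ := L2 E idx i hD'
      have hEE : E j' ⊆ E j :=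
        (Set.image_subset_image_iff Sum.inl_injective).mp (hsub'.trans hsub)
      have : E j' = E j := hSmin (E j') ((hH i).symm ▸ ⟨j', hj', rfl⟩) hEE
      exact Set.Subset.antisymm hsub (this ▸ hsub')
  · have hit : ∀ T : Set (V ⊕ Fin d),
        IsHittingSet (puncturedDiffSetsAt E idx i) T ↔
          IsHittingSet ((fun S : Set V => Sum.inl '' S) '' H i) T := by
      intro T
      constructor
      · rintro h _ ⟨S, hS, rfl⟩
        rw [hH] at hS
        obtain ⟨j, hj, rfl⟩ := hS
        exact h _ (L1 E idx i j hj)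
      · intro h D hD
        obtain ⟨j, hj, hsub⟩ := L2 E idx i hD
        have := h (Sum.inl '' E j) ⟨E j, (hH i).symm ▸ ⟨j, hj, rfl⟩, rfl⟩
        exact this.mono (Set.inter_subset_inter le_rfl hsub)
    intro T
    constructor
    · rintro ⟨h1, h2⟩
      exact ⟨(hit T).mp h1, fun T' hT' h => h2 T' hT' ((hit T').mpr h)⟩
    · rintro ⟨h1, h2⟩
      exact ⟨(hit T).mpr h1, fun T' hT' h => h2 T' hT' ((hit T').mp h)⟩
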